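/- arXiv:2006.12509 — 2 statements merged into one kernel-verified Lean document; each statement's English description precedes it below -/
import Mathlib

section
/- For the d-dimensional depolarizing channel D_{d,ε}(ρ) = (1−ε)ρ + ε Tr[ρ] I/d with 0 ≤ ε < 1, the identity channel admits the decomposition id = (1 + (d²−1)ε/(d²(1−ε))) D_{d,ε} − (ε/(d²(1−ε))) Σ_{i=1}^{d²−1} D_{d,ε} ∘ P_i, where P_i(ρ) = σ_i ρ σ_i† for the d²−1 nonidentity generalized Pauli (Heisenberg–Weyl) unitaries σ_i. -/
open Matrix

/-- The depolarizing channel `D_{d,ε}(ρ) = (1-ε) ρ + ε Tr[ρ] I/d` on `d × d` matrices. -/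
noncomputable def depolarize (d : ℕ) (ε : ℝ) (ρ : Matrix (Fin d) (Fin d) ℂ) :
    Matrix (Fin d) (Fin d) ℂ :=
  (1 - ε) • ρ + ε • (ρ.trace • ((d : ℂ)⁻¹ • (1 : Matrix (Fin d) (Fin d) ℂ)))

lemma depolarize_sum {d : ℕ} (ε : ℝ) {ι : Type*} (s : Finset ι)
    (f : ι → Matrix (Fin d) (Fin d) ℂ) :
    ∑ i ∈ s, depolarize d ε (f i) = depolarize d ε (∑ i ∈ s, f i) := by
  simp [depolarize, Finset.sum_add_distrib, Finset.smul_sum, trace_sum, Finset.sum_smul]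

/-- decomposition of the identity channel via the depolarizing channel and
the generalized Pauli (Heisenberg–Weyl) unitary channels. -/
theorem identity_decomposition_depolarizing
    (d : ℕ) [NeZero d] (hd : 0 < d) (ε : ℝ) (hε0 : 0 ≤ ε) (hε1 : ε < 1)
    (σ : Fin (d ^ 2) → Matrix (Fin d) (Fin d) ℂ)
    (hσ0 : σ 0 = 1)
    (htwirl : ∀ ρ : Matrix (Fin d) (Fin d) ℂ,
      ((d : ℂ) ^ 2)⁻¹ • ∑ i, σ i * ρ * (σ i)ᴴ
        = ρ.trace • ((d : ℂ)⁻¹ • (1 : Matrix (Fin d) (Fin d) ℂ))) :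
    ∀ ρ : Matrix (Fin d) (Fin d) ℂ,
      ρ = (1 + ((d : ℝ) ^ 2 - 1) * ε / ((d : ℝ) ^ 2 * (1 - ε))) • depolarize d ε ρ
          - (ε / ((d : ℝ) ^ 2 * (1 - ε))) •
              ∑ i ∈ Finset.univ.erase 0, depolarize d ε (σ i * ρ * (σ i)ᴴ) := by
  intro ρ
  have hdC : (d : ℂ) ≠ 0 := Nat.cast_ne_zero.mpr hd.ne'
  have hdR : (d : ℝ) ≠ 0 := Nat.cast_ne_zero.mpr hd.ne'
  have hεR : (1 : ℝ) - ε ≠ 0 := by linarith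
  have hS : ∑ i, σ i * ρ * (σ i)ᴴ
      = ((d : ℂ) ^ 2) • (ρ.trace • ((d : ℂ)⁻¹ • (1 : Matrix (Fin d) (Fin d) ℂ))) := by
    rw [← htwirl ρ, smul_smul, mul_inv_cancel₀ (pow_ne_zero 2 hdC), one_smul]
  have herase : ∑ i ∈ Finset.univ.erase 0, σ i * ρ * (σ i)ᴴ
      = ((d : ℂ) ^ 2) • (ρ.trace • ((d : ℂ)⁻¹ • (1 : Matrix (Fin d) (Fin d) ℂ))) - ρ := by
    rw [Finset.sum_erase_eq_sub (Finset.mem_univ 0), hS, hσ0]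
    simp
  rw [depolarize_sum, herase]
  ext i j
  simp only [depolarize, Matrix.sub_apply, Matrix.add_apply, Matrix.smul_apply,
    Matrix.one_apply, trace_sub, trace_smul, trace_one, smul_eq_mul, Complex.real_smul,
    Complex.ofReal_sub, Complex.ofReal_one, Complex.ofReal_add, Complex.ofReal_div,
    Complex.ofReal_mul, Complex.ofReal_pow, Complex.ofReal_natCast]
  have hεC : (1 : ℂ) - (ε : ℂ) ≠ 0 := by
    exact_mod_cast (Complex.ofReal_ne_zero.mpr hεR)
  by_cases h : i = j <;> simp [h] <;> field_simp <;> ring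
end

section
/- For the qubit amplitude damping channel A_ε with Kraus operators A_0 = |0⟩⟨0| + √(1−ε)|1⟩⟨1| and A_1 = √ε |0⟩⟨1|, and 0 ≤ ε < 1, the identity channel decomposes as id = ((1+√(1−ε))/(2(1−ε))) A_ε + ((1−√(1−ε))/(2(1−ε))) A_ε∘Z − (ε/(1−ε)) A_ε∘P_{|0⟩}, where Z(ρ)=ZρZ and P_{|0⟩}(ρ) = Tr[ρ]|0⟩⟨0|. -/
open Matrix
set_option maxHeartbeats 1000000
noncomputable def ampDamp (ε : ℝ) (ρ : Matrix (Fin 2) (Fin 2) ℂ) : Matrix (Fin 2) (Fin 2) ℂ :=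
  let A0 : Matrix (Fin 2) (Fin 2) ℂ := !![1, 0; 0, (Real.sqrt (1 - ε) : ℂ)]
  let A1 : Matrix (Fin 2) (Fin 2) ℂ := !![0, (Real.sqrt ε : ℂ); 0, 0]
  A0 * ρ * A0ᴴ + A1 * ρ * A1ᴴ
noncomputable def zChannel (ρ : Matrix (Fin 2) (Fin 2) ℂ) : Matrix (Fin 2) (Fin 2) ℂ :=
  !![1, 0; 0, -1] * ρ * !![1, 0; 0, -1]
noncomputable def prep0 (ρ : Matrix (Fin 2) (Fin 2) ℂ) : Matrix (Fin 2) (Fin 2) ℂ :=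
  ρ.trace • !![1, 0; 0, 0]
/-- decomposition of the identity channel via the amplitude damping channel. -/
theorem identity_decomposition_ampDamp (ε : ℝ) (hε0 : 0 ≤ ε) (hε1 : ε < 1) :
    ∀ ρ : Matrix (Fin 2) (Fin 2) ℂ,
      ρ = ((1 + Real.sqrt (1 - ε)) / (2 * (1 - ε))) • ampDamp ε ρ
          + ((1 - Real.sqrt (1 - ε)) / (2 * (1 - ε))) • ampDamp ε (zChannel ρ)
          - (ε / (1 - ε)) • ampDamp ε (prep0 ρ) := by
  intro ρ
  have hs : (Real.sqrt (1 - ε) : ℂ) * (Real.sqrt (1 - ε) : ℂ) = 1 - (ε : ℂ) := by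
    rw [← Complex.ofReal_mul, Real.mul_self_sqrt (by linarith)]
    push_cast; ring
  have h1 : (1 : ℂ) - (ε : ℂ) ≠ 0 := by
    intro h
    have : (ε : ℂ) = 1 := by linear_combination -h
    exact absurd (by exact_mod_cast this) (ne_of_lt hε1)
  have hse : (Real.sqrt ε : ℂ) * (Real.sqrt ε : ℂ) = (ε : ℂ) := by
    rw [← Complex.ofReal_mul, Real.mul_self_sqrt hε0]
  have hA0 : (!![1, 0; 0, (Real.sqrt (1 - ε) : ℂ)])ᴴ = !![1, 0; 0, (Real.sqrt (1 - ε) : ℂ)] := by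
    ext i j; fin_cases i <;> fin_cases j <;> simp [conjTranspose_apply]
  have hA1 : (!![0, (Real.sqrt ε : ℂ); 0, 0])ᴴ = !![0, 0; (Real.sqrt ε : ℂ), 0] := by
    ext i j; fin_cases i <;> fin_cases j <;> simp [conjTranspose_apply]
  have key : ∀ σ : Matrix (Fin 2) (Fin 2) ℂ,
      ampDamp ε σ = !![σ 0 0 + ε * σ 1 1, (Real.sqrt (1 - ε) : ℂ) * σ 0 1;
                       (Real.sqrt (1 - ε) : ℂ) * σ 1 0, (1 - ε) * σ 1 1] := by
    intro σ
    rw [ampDamp]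
    simp only [hA0, hA1]
    rw [Matrix.eta_fin_two σ]
    rw [Matrix.mul_fin_two, Matrix.mul_fin_two, Matrix.mul_fin_two, Matrix.mul_fin_two]
    ext i j
    fin_cases i <;> fin_cases j <;>
      simp [Fin.mk_zero, Fin.mk_one] <;>
      (first
        | ring1
        | linear_combination σ 1 1 * hse
        | linear_combination σ 1 1 * hs
        | linear_combination (-(σ 1 1)) * hs)
  have hz : zChannel ρ = !![ρ 0 0, -ρ 0 1; -ρ 1 0, ρ 1 1] := by
    rw [zChannel, Matrix.eta_fin_two ρ, Matrix.mul_fin_two, Matrix.mul_fin_two]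
    ext i j; fin_cases i <;> fin_cases j <;> simp <;> ring
  have hp : prep0 ρ = !![ρ 0 0 + ρ 1 1, 0; 0, 0] := by
    rw [prep0, Matrix.trace_fin_two]
    ext i j; fin_cases i <;> fin_cases j <;> simp
  rw [hz, hp, key, key, key]
  ext i j
  fin_cases i <;> fin_cases j <;> simp [Fin.mk_zero, Fin.mk_one] <;> field_simp <;>
    (first
      | ring1
      | linear_combination (2 * ρ 0 0) * hs
      | linear_combination (-2 * ρ 0 0) * hs
      | linear_combination (2 * ρ 0 1) * hs
      | linear_combination (-2 * ρ 0 1) * hs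
      | linear_combination (2 * ρ 1 0) * hs
      | linear_combination (-2 * ρ 1 0) * hs
      | linear_combination (2 * ρ 1 1) * hs
      | linear_combination (-2 * ρ 1 1) * hs)
end
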